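/- Let X be an n-by-d real matrix with X^T X invertible, Y in R^n, let x_1 in R^d be nonzero, and let y_1 in R. Let theta_loo = (X^T X)^{-1} X^T Y, and for lambda > 0 let theta_full(lambda) = (X^T X + lambda^2 x_1 x_1^T)^{-1} (X^T Y + lambda^2 y_1 x_1) (this inverse exists for all lambda). Then as lambda tends to infinity, theta_full(lambda) - theta_loo converges to C' (X^T X)^{-1} x_1, where C' = (y_1 - x_1^T (X^T X)^{-1} X^T Y) / (x_1^T (X^T X)^{-1} x_1). -/

import Mathlib

open Matrix Filter

lemma aux_vecMulVec_mulVec {d : ℕ} (a b v : Fin d → ℝ) :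
    (vecMulVec a b) *ᵥ v = (b ⬝ᵥ v) • a := by
  ext i
  simp only [mulVec, vecMulVec_apply, dotProduct, Pi.smul_apply, smul_eq_mul, Finset.sum_mul]
  exact Finset.sum_congr rfl fun x _ => by ring

lemma aux_vecMulVec_mul {d : ℕ} (a b c e : Fin d → ℝ) (M : Matrix (Fin d) (Fin d) ℝ) :
    vecMulVec a b * M * vecMulVec c e = (b ⬝ᵥ (M *ᵥ c)) • vecMulVec a e := by
  ext i j
  simp [mul_apply, vecMulVec_apply, mulVec, dotProduct, Finset.mul_sum, Finset.sum_mul, smul_eq_mul]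
  rw [Finset.sum_comm]
  refine Finset.sum_congr rfl fun k _ => ?_
  refine Finset.sum_congr rfl fun x _ => by ring

theorem stmt_14 {n d : ℕ} (X : Matrix (Fin n) (Fin d) ℝ) (hX : IsUnit (Xᵀ * X))
    (Y : Fin n → ℝ) (x₁ : Fin d → ℝ) (hx₁ : x₁ ≠ 0) (y₁ : ℝ) :
    Tendsto
      (fun lam : ℝ =>
        (X.transpose * X + lam ^ 2 • vecMulVec x₁ x₁)⁻¹.mulVec
            (Xᵀ.mulVec Y + (lam ^ 2 * y₁) • x₁)
          - ((Xᵀ * X)⁻¹ * Xᵀ).mulVec Y)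
      atTop
      (nhds
        (((y₁ - x₁ ⬝ᵥ ((Xᵀ * X)⁻¹ * Xᵀ).mulVec Y) /
            (x₁ ⬝ᵥ (Xᵀ * X)⁻¹.mulVec x₁)) • (Xᵀ * X)⁻¹.mulVec x₁)) := by
  classical
  set A : Matrix (Fin d) (Fin d) ℝ := Xᵀ * X with hAdef
  have hdet : IsUnit A.det := (isUnit_iff_isUnit_det A).mp hX
  have hA1 : A * A⁻¹ = 1 := mul_nonsing_inv A hdet
  -- positive definiteness of A
  have hApd : A.PosDef := by
    refine Matrix.PosDef.of_dotProduct_mulVec_pos ?_ fun v hv => ?_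
    · have := isHermitian_conjTranspose_mul_self X
      rwa [conjTranspose_eq_transpose_of_trivial] at this
    · have hinj : Function.Injective (A.mulVec) :=
        Matrix.mulVec_injective_iff_isUnit.mpr hX
      have hXv : X *ᵥ v ≠ 0 := by
        intro h
        apply hv
        have hz : A *ᵥ v = 0 := by
          rw [hAdef, ← mulVec_mulVec, h, mulVec_zero]
        exact hinj (a₂ := 0) (by simpa using hz)
      have hq : star v ⬝ᵥ (A *ᵥ v) = (X *ᵥ v) ⬝ᵥ (X *ᵥ v) := by
        rw [hAdef, ← mulVec_mulVec, Matrix.dotProduct_mulVec]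
        congr 1
        simp [vecMul_transpose, star_trivial]
      rw [hq]
      have := Matrix.dotProduct_star_self_pos_iff (v := X *ᵥ v) |>.mpr hXv
      simpa [star_trivial] using this
  have hAinv : (A⁻¹).PosDef := hApd.inv
  set u : Fin d → ℝ := A⁻¹ *ᵥ x₁ with hudef
  set s : ℝ := x₁ ⬝ᵥ u with hsdef
  have hs : 0 < s := by
    have := hAinv.dotProduct_mulVec_pos hx₁
    simpa [star_trivial, hsdef, hudef] using this
  set θ : Fin d → ℝ := (A⁻¹ * Xᵀ) *ᵥ Y with hθdef
  set c : ℝ := x₁ ⬝ᵥ θ with hcdef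
  set V : Matrix (Fin d) (Fin d) ℝ := vecMulVec x₁ x₁ with hVdef
  have hden : ∀ lam : ℝ, (1 : ℝ) + lam ^ 2 * s ≠ 0 := fun lam => by
    have : 0 ≤ lam ^ 2 * s := mul_nonneg (sq_nonneg _) hs.le
    linarith
  have key : ∀ lam : ℝ,
      (A + lam ^ 2 • V)⁻¹ *ᵥ (Xᵀ *ᵥ Y + (lam ^ 2 * y₁) • x₁) - θ
        = (lam ^ 2 * (y₁ - c) / (1 + lam ^ 2 * s)) • u := by
    intro lam
    set k : ℝ := lam ^ 2 / (1 + lam ^ 2 * s) with hkdef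
    have hk : k * (1 + lam ^ 2 * s) = lam ^ 2 := by
      rw [hkdef]; exact div_mul_cancel₀ _ (hden lam)
    have hVAV : V * A⁻¹ * V = s • V := by
      rw [hVdef, aux_vecMulVec_mul, ← hudef, ← hsdef]
    have hMB : (A + lam ^ 2 • V) * (A⁻¹ - k • (A⁻¹ * V * A⁻¹)) = 1 := by
      have expand : (A + lam ^ 2 • V) * (A⁻¹ - k • (A⁻¹ * V * A⁻¹))
          = A * A⁻¹ - k • (A * (A⁻¹ * V * A⁻¹))
            + (lam ^ 2 • (V * A⁻¹) - (lam ^ 2 * k) • (V * (A⁻¹ * V * A⁻¹))) := by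
        rw [add_mul, mul_sub, mul_sub]
        rw [mul_smul_comm, mul_smul_comm, smul_mul_assoc, smul_mul_assoc, smul_smul]
        ring_nf
      rw [expand]
      have e1 : A * (A⁻¹ * V * A⁻¹) = V * A⁻¹ := by
        rw [← mul_assoc, ← mul_assoc, hA1, one_mul]
      have e2 : V * (A⁻¹ * V * A⁻¹) = s • (V * A⁻¹) := by
        calc V * (A⁻¹ * V * A⁻¹) = (V * A⁻¹ * V) * A⁻¹ := by
              rw [mul_assoc, mul_assoc, mul_assoc]
        _ = (s • V) * A⁻¹ := by rw [hVAV]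
        _ = s • (V * A⁻¹) := smul_mul_assoc s V A⁻¹
      rw [e1, e2, hA1, smul_smul]
      have hcoef0 : lam ^ 2 - lam ^ 2 * k * s - k = 0 := by nlinarith [hk]
      have hcomb : (1 : Matrix (Fin d) (Fin d) ℝ) - k • (V * A⁻¹)
            + (lam ^ 2 • (V * A⁻¹) - (lam ^ 2 * k * s) • (V * A⁻¹))
          = 1 + (lam ^ 2 - lam ^ 2 * k * s - k) • (V * A⁻¹) := by
        rw [sub_smul, sub_smul]; abel
      rw [hcomb, hcoef0, zero_smul, add_zero]
    have hInv : (A + lam ^ 2 • V)⁻¹ = A⁻¹ - k • (A⁻¹ * V * A⁻¹) :=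
      inv_eq_right_inv hMB
    rw [hInv]
    have hb : A⁻¹ *ᵥ (Xᵀ *ᵥ Y) = θ := by rw [hθdef, ← mulVec_mulVec]
    have hVb : (A⁻¹ * V * A⁻¹) *ᵥ (Xᵀ *ᵥ Y) = c • u := by
      rw [← mulVec_mulVec, hb, ← mulVec_mulVec, hVdef, aux_vecMulVec_mulVec, ← hcdef,
        mulVec_smul]
    have hVx : (A⁻¹ * V * A⁻¹) *ᵥ x₁ = s • u := by
      rw [← mulVec_mulVec, ← hudef, ← mulVec_mulVec, hVdef, aux_vecMulVec_mulVec, ← hsdef,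
        mulVec_smul]
    rw [sub_mulVec, mulVec_add, mulVec_add, mulVec_smul, mulVec_smul, smul_mulVec,
      smul_mulVec, hb, hVb, hVx, ← hudef]
    have hs1 : lam ^ 2 * (y₁ - c) / (1 + lam ^ 2 * s)
        = lam ^ 2 * y₁ - k * c - k * (lam ^ 2 * y₁) * s := by
      rw [hkdef]
      field_simp
      ring
    rw [hs1]
    module
  -- limit of the scalar
  have hscal : Tendsto (fun lam : ℝ => lam ^ 2 * (y₁ - c) / (1 + lam ^ 2 * s)) atTop
      (nhds ((y₁ - c) / s)) := by
    have h0 : Tendsto (fun lam : ℝ => (lam ^ 2)⁻¹) atTop (nhds 0) :=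
      tendsto_inv_atTop_zero.comp (tendsto_pow_atTop (two_ne_zero (α := ℕ)))
    have h1 : Tendsto (fun lam : ℝ => (y₁ - c) / ((lam ^ 2)⁻¹ + s)) atTop
        (nhds ((y₁ - c) / (0 + s))) := by
      apply Tendsto.div tendsto_const_nhds (h0.add tendsto_const_nhds)
      simpa using hs.ne'
    rw [zero_add] at h1
    refine h1.congr' ?_
    filter_upwards [eventually_ge_atTop (1 : ℝ)] with lam hlam
    have hl : lam ^ 2 ≠ 0 := by positivity
    field_simp
  exact Tendsto.congr (fun lam => (key lam).symm) (hscal.smul_const u)
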